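/- arXiv:1402.6092 — 8 statements merged into one kernel-verified Lean document; each statement's English description precedes it below -/
import Mathlib

section
/- For the 2-vertex IFS attractor (F_u, F_v) with parameters a, b, c, d, g_u, g_v > 0, a + g_u + b = 1, c + g_v + d = 1: F_u = F_v if and only if a = c and b = d. -/
/-- A gap of a set `F ⊆ ℝ`: an interval with endpoints in `F` whose interior misses `F`. -/
def MyGap (F : Set ℝ) (p q : ℝ) : Prop :=
  p ∈ F ∧ q ∈ F ∧ p < q ∧ ∀ x ∈ F, x ∉ Set.Ioo p q

section Aux

variable {a b gu : ℝ} {F : Set ℝ}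

/-- From one invariance equation: `0, 1 ∈ F` and `F ⊆ [0,1]`. -/
lemma bounds01 (ha : 0 < a) (hb : 0 < b) (hgu : 0 < gu)
    (hsum : a + gu + b = 1) (hne : F.Nonempty) (hcpt : IsCompact F)
    (hF : F = (fun x => a * x) '' F ∪ (fun x => b * x + (a + gu)) '' F) :
    0 ∈ F ∧ 1 ∈ F ∧ ∀ x ∈ F, 0 ≤ x ∧ x ≤ 1 := by
  obtain ⟨m, hmF, hmlb⟩ := hcpt.exists_isLeast hne
  obtain ⟨M, hMF, hMub⟩ := hcpt.exists_isGreatest hne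
  have hamF : a * m ∈ F := by
    rw [hF]; exact Or.inl ⟨m, hmF, rfl⟩
  have hbMF : b * M + (a + gu) ∈ F := by
    rw [hF]; exact Or.inr ⟨M, hMF, rfl⟩
  have hm0 : m ≤ 0 := by
    have := hmlb hamF
    nlinarith
  have hM1 : 1 ≤ M := by
    have := hMub hbMF
    nlinarith
  have hmeq : m = 0 := by
    have hmF' := hmF
    rw [hF] at hmF'
    rcases hmF' with ⟨y, hy, hay⟩ | ⟨y, hy, hay⟩
    · replace hay : a * y = m := hay
      have hym : m ≤ y := hmlb hy
      nlinarith
    · replace hay : b * y + (a + gu) = m := hay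
      have hym : m ≤ y := hmlb hy
      nlinarith
  have hMeq : M = 1 := by
    have hMF' := hMF
    rw [hF] at hMF'
    rcases hMF' with ⟨y, hy, hay⟩ | ⟨y, hy, hay⟩
    · replace hay : a * y = M := hay
      have hyM : y ≤ M := hMub hy
      nlinarith
    · replace hay : b * y + (a + gu) = M := hay
      have hyM : y ≤ M := hMub hy
      nlinarith
  refine ⟨hmeq ▸ hmF, hMeq ▸ hMF, fun x hx => ⟨hmeq ▸ hmlb hx, hMeq ▸ hMub hx⟩⟩

/-- Every point of `F` lies in `[0,a]` or `[a+gu,1]`. -/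
lemma side_of_mem (ha : 0 < a) (hb : 0 < b)
    (hsub : ∀ x ∈ F, 0 ≤ x ∧ x ≤ 1)
    (hF : F = (fun x => a * x) '' F ∪ (fun x => b * x + (a + gu)) '' F)
    {x : ℝ} (hx : x ∈ F) : x ≤ a ∨ a + gu ≤ x := by
  rw [hF] at hx
  rcases hx with ⟨y, hy, hay⟩ | ⟨y, hy, hay⟩
  · replace hay : a * y = x := hay
    left; have := (hsub y hy).2; nlinarith
  · replace hay : b * y + (a + gu) = x := hay
    right; have := (hsub y hy).1; nlinarith

lemma left_piece (ha : 0 < a) (hb : 0 < b) (hgu : 0 < gu)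
    (hsub : ∀ x ∈ F, 0 ≤ x ∧ x ≤ 1)
    (hF : F = (fun x => a * x) '' F ∪ (fun x => b * x + (a + gu)) '' F)
    {x : ℝ} (hx : x ∈ F) (hxa : x ≤ a) : ∃ y ∈ F, a * y = x := by
  rw [hF] at hx
  rcases hx with ⟨y, hy, hay⟩ | ⟨y, hy, hay⟩
  · exact ⟨y, hy, hay⟩
  · replace hay : b * y + (a + gu) = x := hay
    exfalso; have := (hsub y hy).1; nlinarith

lemma right_piece (ha : 0 < a) (hb : 0 < b) (hgu : 0 < gu)
    (hsub : ∀ x ∈ F, 0 ≤ x ∧ x ≤ 1)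
    (hF : F = (fun x => a * x) '' F ∪ (fun x => b * x + (a + gu)) '' F)
    {x : ℝ} (hx : x ∈ F) (hxa : a + gu ≤ x) : ∃ y ∈ F, b * y + (a + gu) = x := by
  rw [hF] at hx
  rcases hx with ⟨y, hy, hay⟩ | ⟨y, hy, hay⟩
  · replace hay : a * y = x := hay
    exfalso; have := (hsub y hy).2; nlinarith
  · exact ⟨y, hy, hay⟩

/-- The middle gap `(a, a+gu)`. -/
lemma mid_gap (ha : 0 < a) (hb : 0 < b) (hgu : 0 < gu)
    (h0 : 0 ∈ F) (h1 : 1 ∈ F) (hsub : ∀ x ∈ F, 0 ≤ x ∧ x ≤ 1)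
    (hF : F = (fun x => a * x) '' F ∪ (fun x => b * x + (a + gu)) '' F) :
    MyGap F a (a + gu) := by
  refine ⟨?_, ?_, by linarith, ?_⟩
  · rw [hF]; exact Or.inl ⟨1, h1, by ring⟩
  · rw [hF]; exact Or.inr ⟨0, h0, by ring⟩
  · intro x hx hmem
    rcases side_of_mem ha hb hsub hF hx with h | h
    · exact absurd hmem.1 (by linarith)
    · exact absurd hmem.2 (by linarith)

/-- Structure of gaps: each gap lies in `[0,a]`, is the middle gap, or lies in `[a+gu,1]`. -/
lemma gap_cases (ha : 0 < a) (hb : 0 < b) (hgu : 0 < gu)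
    (h0 : 0 ∈ F) (h1 : 1 ∈ F) (hsub : ∀ x ∈ F, 0 ≤ x ∧ x ≤ 1)
    (hF : F = (fun x => a * x) '' F ∪ (fun x => b * x + (a + gu)) '' F)
    {p q : ℝ} (hg : MyGap F p q) :
    q ≤ a ∨ (p = a ∧ q = a + gu) ∨ a + gu ≤ p := by
  obtain ⟨hp, hq, hpq, hgap⟩ := hg
  have haF : a ∈ F := by rw [hF]; exact Or.inl ⟨1, h1, by ring⟩
  have htF : a + gu ∈ F := by rw [hF]; exact Or.inr ⟨0, h0, by ring⟩
  by_cases hq' : q ≤ a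
  · exact Or.inl hq'
  push_neg at hq'
  by_cases hp' : a + gu ≤ p
  · exact Or.inr (Or.inr hp')
  push_neg at hp'
  -- a ∉ (p,q) and a+gu ∉ (p,q)
  have ha_not := hgap a haF
  have ht_not := hgap (a + gu) htF
  simp only [Set.mem_Ioo, not_and_or, not_lt] at ha_not ht_not
  have hpa : a ≤ p := by
    rcases ha_not with h | h
    · exact h
    · exfalso; linarith
  have hqt : q ≤ a + gu := by
    rcases ht_not with h | h
    · exfalso; linarith
    · exact h
  rcases side_of_mem ha hb hsub hF hp with h | h
  · rcases side_of_mem ha hb hsub hF hq with h' | h'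
    · exfalso; linarith
    · exact Or.inr (Or.inl ⟨le_antisymm h hpa, le_antisymm hqt h'⟩)
  · exfalso; linarith

/-- A gap inside `[0,a]` rescales to a gap of `F` that is `1/a` times longer. -/
lemma gap_scale_left (ha : 0 < a) (hb : 0 < b) (hgu : 0 < gu)
    (hsub : ∀ x ∈ F, 0 ≤ x ∧ x ≤ 1)
    (hF : F = (fun x => a * x) '' F ∪ (fun x => b * x + (a + gu)) '' F)
    {p q : ℝ} (hg : MyGap F p q) (hqa : q ≤ a) : MyGap F (p / a) (q / a) := by
  obtain ⟨hp, hq, hpq, hgap⟩ := hg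
  obtain ⟨y, hyF, hy⟩ := left_piece ha hb hgu hsub hF hp (by linarith)
  obtain ⟨z, hzF, hz⟩ := left_piece ha hb hgu hsub hF hq hqa
  have hyv : y = p / a := by field_simp; linarith
  have hzv : z = q / a := by field_simp; linarith
  refine ⟨hyv ▸ hyF, hzv ▸ hzF, by gcongr, ?_⟩
  · intro x hx hmem
    have haxF : a * x ∈ F := by rw [hF]; exact Or.inl ⟨x, hx, rfl⟩
    refine hgap (a * x) haxF ⟨?_, ?_⟩
    · have := hmem.1; rw [div_lt_iff₀ ha] at this; linarith [this]
    · have := hmem.2; rw [lt_div_iff₀ ha] at this; linarith [this]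

/-- A gap inside `[a+gu,1]` rescales to a gap of `F` that is `1/b` times longer. -/
lemma gap_scale_right (ha : 0 < a) (hb : 0 < b) (hgu : 0 < gu)
    (hsub : ∀ x ∈ F, 0 ≤ x ∧ x ≤ 1)
    (hF : F = (fun x => a * x) '' F ∪ (fun x => b * x + (a + gu)) '' F)
    {p q : ℝ} (hg : MyGap F p q) (hpt : a + gu ≤ p) :
    MyGap F ((p - (a + gu)) / b) ((q - (a + gu)) / b) := by
  obtain ⟨hp, hq, hpq, hgap⟩ := hg
  obtain ⟨y, hyF, hy⟩ := right_piece ha hb hgu hsub hF hp hpt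
  obtain ⟨z, hzF, hz⟩ := right_piece ha hb hgu hsub hF hq (by linarith)
  have hyv : y = (p - (a + gu)) / b := by field_simp; linarith
  have hzv : z = (q - (a + gu)) / b := by field_simp; linarith
  refine ⟨hyv ▸ hyF, hzv ▸ hzF, by gcongr, ?_⟩
  · intro x hx hmem
    have hbxF : b * x + (a + gu) ∈ F := by rw [hF]; exact Or.inr ⟨x, hx, rfl⟩
    refine hgap (b * x + (a + gu)) hbxF ⟨?_, ?_⟩
    · have := hmem.1; rw [div_lt_iff₀ hb] at this; linarith [this]
    · have := hmem.2; rw [lt_div_iff₀ hb] at this; linarith [this]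

/-- Every gap of `F` has length at most `gu`. -/
lemma gap_le (ha : 0 < a) (hb : 0 < b) (hgu : 0 < gu)
    (hsum : a + gu + b = 1)
    (h0 : 0 ∈ F) (h1 : 1 ∈ F) (hsub : ∀ x ∈ F, 0 ≤ x ∧ x ≤ 1)
    (hF : F = (fun x => a * x) '' F ∪ (fun x => b * x + (a + gu)) '' F)
    {p q : ℝ} (hg : MyGap F p q) : q - p ≤ gu := by
  by_contra hcon
  push_neg at hcon
  set r : ℝ := max a b with hr
  have hr0 : 0 < r := lt_max_of_lt_left ha
  have hr1 : r < 1 := max_lt (by linarith) (by linarith)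
  have har : a ≤ r := le_max_left a b
  have hbr : b ≤ r := le_max_right a b
  have main : ∀ n : ℕ, ∃ p' q', MyGap F p' q' ∧ gu < q' - p' ∧ q - p ≤ r ^ n * (q' - p') := by
    intro n
    induction n with
    | zero => exact ⟨p, q, hg, hcon, by simp⟩
    | succ n ih =>
      obtain ⟨p', q', hg', hlen, hle⟩ := ih
      have hrn : (0:ℝ) < r ^ n := pow_pos hr0 n
      rcases gap_cases ha hb hgu h0 h1 hsub hF hg' with hcase | ⟨hpa, hqt⟩ | hcase
      · refine ⟨p' / a, q' / a, gap_scale_left ha hb hgu hsub hF hg' hcase, ?_, ?_⟩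
        · have : q' - p' ≤ (q' - p') / a := by
            rw [le_div_iff₀ ha]; nlinarith
          calc gu < q' - p' := hlen
            _ ≤ (q' - p') / a := this
            _ = q' / a - p' / a := by ring
        · have h1' : q' / a - p' / a = (q' - p') / a := by ring
          rw [h1', pow_succ]
          rw [div_eq_mul_inv]
          have : r ^ n * (q' - p') ≤ r ^ n * r * ((q' - p') * a⁻¹) := by
            have hainv : (1:ℝ) ≤ r * a⁻¹ := by
              rw [← div_eq_mul_inv, le_div_iff₀ ha]; linarith
            nlinarith [mul_pos hrn (show (0:ℝ) < q' - p' by linarith)]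
          linarith
      · exfalso; rw [hpa, hqt] at hlen; linarith
      · refine ⟨(p' - (a + gu)) / b, (q' - (a + gu)) / b,
          gap_scale_right ha hb hgu hsub hF hg' hcase, ?_, ?_⟩
        · have : q' - p' ≤ (q' - p') / b := by
            rw [le_div_iff₀ hb]; nlinarith
          calc gu < q' - p' := hlen
            _ ≤ (q' - p') / b := this
            _ = (q' - (a + gu)) / b - (p' - (a + gu)) / b := by ring
        · have h1' : (q' - (a + gu)) / b - (p' - (a + gu)) / b = (q' - p') / b := by ring
          rw [h1', pow_succ, div_eq_mul_inv]
          have : r ^ n * (q' - p') ≤ r ^ n * r * ((q' - p') * b⁻¹) := by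
            have hbinv : (1:ℝ) ≤ r * b⁻¹ := by
              rw [← div_eq_mul_inv, le_div_iff₀ hb]; linarith
            nlinarith [mul_pos hrn (show (0:ℝ) < q' - p' by linarith)]
          linarith
  have hqp0 : 0 < q - p := by linarith [hg.2.2.1]
  obtain ⟨n, hn⟩ := exists_pow_lt_of_lt_one hqp0 hr1
  obtain ⟨p', q', hg', hlen, hle⟩ := main n
  have hq1 : q' - p' ≤ 1 := by
    have := (hsub p' hg'.1).1
    have := (hsub q' hg'.2.1).2
    linarith
  have : q - p ≤ r ^ n := by
    calc q - p ≤ r ^ n * (q' - p') := hle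
      _ ≤ r ^ n * 1 := by
          apply mul_le_mul_of_nonneg_left hq1 (le_of_lt (pow_pos hr0 n))
      _ = r ^ n := mul_one _
  linarith

end Aux

/-- For the 2-vertex IFS attractor, `F_u = F_v` if and only if `a = c` and `b = d`. -/
theorem two_vertex_attractor_eq_iff_params_eq
    (a b c d gu gv : ℝ)
    (ha : 0 < a) (hb : 0 < b) (hc : 0 < c) (hd : 0 < d)
    (hgu : 0 < gu) (hgv : 0 < gv)
    (hsum1 : a + gu + b = 1) (hsum2 : c + gv + d = 1)
    (Fu Fv : Set ℝ)
    (hFune : Fu.Nonempty) (hFucpt : IsCompact Fu)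
    (hFvne : Fv.Nonempty) (hFvcpt : IsCompact Fv)
    (hinvu : Fu = (fun x => a * x) '' Fu ∪ (fun x => b * x + (a + gu)) '' Fv)
    (hinvv : Fv = (fun x => c * x) '' Fv ∪ (fun x => d * x + (c + gv)) '' Fu) :
    Fu = Fv ↔ (a = c ∧ b = d) := by
  constructor
  · -- forward direction
    intro hEq
    subst hEq
    obtain ⟨h0, h1, hsub⟩ := bounds01 ha hb hgu hsum1 hFune hFucpt hinvu
    have mid1 : MyGap Fu a (a + gu) := mid_gap ha hb hgu h0 h1 hsub hinvu
    have mid2 : MyGap Fu c (c + gv) := mid_gap hc hd hgv h0 h1 hsub hinvv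
    have hguv : gu ≤ gv := by
      have := gap_le hc hd hgv hsum2 h0 h1 hsub hinvv mid1
      linarith
    have hgvu : gv ≤ gu := by
      have := gap_le ha hb hgu hsum1 h0 h1 hsub hinvu mid2
      linarith
    have hguveq : gu = gv := le_antisymm hguv hgvu
    rcases gap_cases ha hb hgu h0 h1 hsub hinvu mid2 with hcase | ⟨hca, hct⟩ | hcase
    · exfalso
      have hg' := gap_scale_left ha hb hgu hsub hinvu mid2 hcase
      have := gap_le ha hb hgu hsum1 h0 h1 hsub hinvu hg'
      have hlen : (c + gv) / a - c / a = gv / a := by ring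
      rw [hlen] at this
      have ha1 : a < 1 := by linarith
      rw [div_le_iff₀ ha] at this
      nlinarith
    · exact ⟨hca.symm, by linarith⟩
    · exfalso
      have hg' := gap_scale_right ha hb hgu hsub hinvu mid2 hcase
      have := gap_le ha hb hgu hsum1 h0 h1 hsub hinvu hg'
      have hlen : (c + gv - (a + gu)) / b - (c - (a + gu)) / b = gv / b := by ring
      rw [hlen] at this
      have hb1 : b < 1 := by linarith
      rw [div_le_iff₀ hb] at this
      nlinarith
  · -- backward direction
    rintro ⟨rfl, rfl⟩
    have hguveq : gu = gv := by linarith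
    subst hguveq
    -- contraction argument via Hausdorff distance
    set D := Metric.hausdorffDist Fu Fv with hD
    have hfin : EMetric.hausdorffEdist Fu Fv ≠ ⊤ :=
      Metric.hausdorffEdist_ne_top_of_nonempty_of_bounded hFune hFvne
        hFucpt.isBounded hFvcpt.isBounded
    have hfin' : EMetric.hausdorffEdist Fv Fu ≠ ⊤ := by
      exact Metric.hausdorffEdist_ne_top_of_nonempty_of_bounded hFvne hFune hFvcpt.isBounded hFucpt.isBounded
    have huv : ∀ x ∈ Fu, ∃ y ∈ Fv, dist x y ≤ D := by
      intro x hx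
      obtain ⟨y, hy, hdy⟩ := hFvcpt.exists_infDist_eq_dist hFvne x
      exact ⟨y, hy, hdy ▸ Metric.infDist_le_hausdorffDist_of_mem hx hfin⟩
    have hvu : ∀ x ∈ Fv, ∃ y ∈ Fu, dist x y ≤ D := by
      intro x hx
      obtain ⟨y, hy, hdy⟩ := hFucpt.exists_infDist_eq_dist hFune x
      refine ⟨y, hy, hdy ▸ ?_⟩
      have := Metric.infDist_le_hausdorffDist_of_mem hx hfin'
      rwa [Metric.hausdorffDist_comm] at this
    set r : ℝ := max a b with hr
    have hr0 : 0 < r := lt_max_of_lt_left ha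
    have hr1 : r < 1 := max_lt (by linarith) (by linarith)
    have hDnn : 0 ≤ D := Metric.hausdorffDist_nonneg
    have hkey : D ≤ r * D := by
      refine Metric.hausdorffDist_le_of_mem_dist (by positivity) ?_ ?_
      · intro x hx
        rw [hinvu] at hx
        rcases hx with ⟨u, hu, rfl⟩ | ⟨w, hw, rfl⟩
        · obtain ⟨v, hv, hdv⟩ := huv u hu
          refine ⟨a * v, by rw [hinvv]; exact Or.inl ⟨v, hv, rfl⟩, ?_⟩
          have : dist (a * u) (a * v) = a * dist u v := by
            rw [Real.dist_eq, Real.dist_eq, ← mul_sub, abs_mul, abs_of_pos ha]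
          rw [this]
          have h1 : a * dist u v ≤ a * D := mul_le_mul_of_nonneg_left hdv ha.le
          have h2 : a * D ≤ r * D := mul_le_mul_of_nonneg_right (le_max_left a b) hDnn
          linarith
        · obtain ⟨z, hz, hdz⟩ := hvu w hw
          refine ⟨b * z + (a + gu), by rw [hinvv]; exact Or.inr ⟨z, hz, rfl⟩, ?_⟩
          have : dist (b * w + (a + gu)) (b * z + (a + gu)) = b * dist w z := by
            rw [Real.dist_eq, Real.dist_eq]
            rw [show b * w + (a + gu) - (b * z + (a + gu)) = b * (w - z) by ring,
              abs_mul, abs_of_pos hb]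
          rw [this]
          have h1 : b * dist w z ≤ b * D := mul_le_mul_of_nonneg_left hdz hb.le
          have h2 : b * D ≤ r * D := mul_le_mul_of_nonneg_right (le_max_right a b) hDnn
          linarith
      · intro x hx
        rw [hinvv] at hx
        rcases hx with ⟨u, hu, rfl⟩ | ⟨w, hw, rfl⟩
        · obtain ⟨v, hv, hdv⟩ := hvu u hu
          refine ⟨a * v, by rw [hinvu]; exact Or.inl ⟨v, hv, rfl⟩, ?_⟩
          have : dist (a * u) (a * v) = a * dist u v := by
            rw [Real.dist_eq, Real.dist_eq, ← mul_sub, abs_mul, abs_of_pos ha]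
          rw [this]
          have h1 : a * dist u v ≤ a * D := mul_le_mul_of_nonneg_left hdv ha.le
          have h2 : a * D ≤ r * D := mul_le_mul_of_nonneg_right (le_max_left a b) hDnn
          linarith
        · obtain ⟨z, hz, hdz⟩ := huv w hw
          refine ⟨b * z + (a + gu), by rw [hinvu]; exact Or.inr ⟨z, hz, rfl⟩, ?_⟩
          have : dist (b * w + (a + gu)) (b * z + (a + gu)) = b * dist w z := by
            rw [Real.dist_eq, Real.dist_eq]
            rw [show b * w + (a + gu) - (b * z + (a + gu)) = b * (w - z) by ring,
              abs_mul, abs_of_pos hb]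
          rw [this]
          have h1 : b * dist w z ≤ b * D := mul_le_mul_of_nonneg_left hdz hb.le
          have h2 : b * D ≤ r * D := mul_le_mul_of_nonneg_right (le_max_right a b) hDnn
          linarith
    have hD0 : D = 0 := by nlinarith
    -- conclude Fu = Fv
    apply Set.eq_of_subset_of_subset
    · intro x hx
      have h1 : Metric.infDist x Fv ≤ D := Metric.infDist_le_hausdorffDist_of_mem hx hfin
      have h2 : Metric.infDist x Fv = 0 := le_antisymm (hD0 ▸ h1) Metric.infDist_nonneg
      exact (hFvcpt.isClosed.mem_iff_infDist_zero hFvne).2 h2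
    · intro x hx
      have h1 : Metric.infDist x Fu ≤ D := by
        have := Metric.infDist_le_hausdorffDist_of_mem hx hfin'
        rwa [Metric.hausdorffDist_comm] at this
      have h2 : Metric.infDist x Fu = 0 := le_antisymm (hD0 ▸ h1) Metric.infDist_nonneg
      exact (hFucpt.isClosed.mem_iff_infDist_zero hFune).2 h2
end

section
/- For the 2-vertex IFS attractor (F_u, F_v) with parameters a, b, c, d, g_u, g_v as above, the interval (a, a + g_u) is disjoint from F_u, and both a and a + g_u belong to F_u; i.e., [a, a+g_u] is a gap interval of F_u. -/
/-- `[a, a+g_u]` is a gap interval of `F_u`: `a, a+g_u ∈ F_u` and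
`(a, a+g_u) ∩ F_u = ∅`. -/
theorem two_vertex_attractor_level_one_gap
    (a b c d gu gv : ℝ)
    (ha : 0 < a) (hb : 0 < b) (hc : 0 < c) (hd : 0 < d)
    (hgu : 0 < gu) (hgv : 0 < gv)
    (hsum1 : a + gu + b = 1) (hsum2 : c + gv + d = 1)
    (Fu Fv : Set ℝ)
    (hFune : Fu.Nonempty) (hFucpt : IsCompact Fu)
    (hFvne : Fv.Nonempty) (hFvcpt : IsCompact Fv)
    (hFu0 : (0:ℝ) ∈ Fu) (hFu1 : (1:ℝ) ∈ Fu) (hFusub : Fu ⊆ Set.Icc 0 1)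
    (hFv0 : (0:ℝ) ∈ Fv) (hFv1 : (1:ℝ) ∈ Fv) (hFvsub : Fv ⊆ Set.Icc 0 1)
    (hinvu : Fu = (fun x => a * x) '' Fu ∪ (fun x => b * x + (a + gu)) '' Fv)
    (hinvv : Fv = (fun x => c * x) '' Fv ∪ (fun x => d * x + (c + gv)) '' Fu) :
    a ∈ Fu ∧ a + gu ∈ Fu ∧ Set.Ioo a (a + gu) ∩ Fu = ∅ := by
  refine ⟨?_, ?_, ?_⟩
  · rw [hinvu]
    exact Or.inl ⟨1, hFu1, by ring⟩
  · rw [hinvu]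
    exact Or.inr ⟨0, hFv0, by ring⟩
  · ext x
    simp only [Set.mem_inter_iff, Set.mem_Ioo, Set.mem_empty_iff_false, iff_false, not_and]
    rintro ⟨hxa, hxb⟩ hx
    rw [hinvu] at hx
    rcases hx with ⟨y, hy, rfl⟩ | ⟨z, hz, rfl⟩ <;> dsimp only at hxa hxb
    · have := (hFusub hy).2
      nlinarith
    · have := (hFvsub hz).1
      nlinarith
end

section
/- Let (F_u)_{u∈V} be the attractor of an n-vertex directed graph IFS on ℝ whose directed graph is strongly connected, and fix u ∈ V. If every simple cycle of the directed graph is attached to u (i.e., passes through u), then there exist finitely many contracting similarities T₁, …, T_m : ℝ → ℝ with F_u = ⋃_{i=1}^m T_i(F_u); that is, F_u is the attractor of a standard (1-vertex) IFS. -/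
open Set

namespace DGIFSaux

variable {V E : Type*} [Fintype V] [Fintype E]

def IsPath (ie te : E → V) (k : ℕ) (q : ℕ → E) : Prop :=
  ∀ i, i + 1 < k → te (q i) = ie (q (i + 1))

def comp (S : E → ℝ → ℝ) : ℕ → (ℕ → E) → ℝ → ℝ
  | 0, _ => id
  | (k+1), q => comp S k q ∘ S (q k)

def extW {E : Type*} (n : ℕ) (hn : 0 < n) (q : Fin n → E) (i : ℕ) : E :=
  q ⟨i % n, Nat.mod_lt _ hn⟩

lemma extW_lt {E : Type*} (n : ℕ) (hn : 0 < n) (q : ℕ → E) (i : ℕ) (hi : i < n) :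
    extW n hn (fun j : Fin n => q j) i = q i := by
  unfold extW
  simp [Nat.mod_eq_of_lt hi]

set_option linter.unusedSectionVars false

lemma comp_congr (S : E → ℝ → ℝ) :
    ∀ (k : ℕ) (q q' : ℕ → E), (∀ i, i < k → q i = q' i) → comp S k q = comp S k q' := by
  intro k
  induction k with
  | zero => intro q q' _; rfl
  | succ k IH =>
    intro q q' h
    show comp S k q ∘ S (q k) = comp S k q' ∘ S (q' k)
    rw [IH q q' (fun i hi => h i (by omega)), h k (by omega)]

lemma comp_ratio (S : E → ℝ → ℝ)
    (hsim : ∀ e, ∃ r : ℝ, 0 < r ∧ r < 1 ∧ ∀ x y : ℝ, dist (S e x) (S e y) = r * dist x y) :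
    ∀ (k : ℕ) (q : ℕ → E), ∃ r : ℝ, 0 < r ∧ r ≤ 1 ∧ (0 < k → r < 1) ∧
      ∀ x y, dist (comp S k q x) (comp S k q y) = r * dist x y := by
  intro k
  induction k with
  | zero =>
    exact fun q => ⟨1, by norm_num, le_refl 1, by omega, fun x y => (one_mul _).symm⟩
  | succ k IH =>
    intro q
    obtain ⟨r, hr0, hr1, _, hr⟩ := IH q
    obtain ⟨s, hs0, hs1, hs⟩ := hsim (q k)
    refine ⟨r * s, by positivity, ?_, fun _ => ?_, fun x y => ?_⟩
    · nlinarith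
    · nlinarith
    · show dist (comp S k q (S (q k) x)) (comp S k q (S (q k) y)) = r * s * dist x y
      rw [hr, hs]; ring

lemma edge_sub (ie te : E → V) (S : E → ℝ → ℝ) (F : V → Set ℝ)
    (hinv : ∀ v, F v = ⋃ e ∈ {e : E | ie e = v}, S e '' F (te e)) (e : E) :
    S e '' F (te e) ⊆ F (ie e) := by
  rw [hinv (ie e)]
  exact Set.subset_biUnion_of_mem (u := fun e => S e '' F (te e)) (x := e) rfl

lemma comp_maps (ie te : E → V) (S : E → ℝ → ℝ) (F : V → Set ℝ)
    (hinv : ∀ v, F v = ⋃ e ∈ {e : E | ie e = v}, S e '' F (te e)) :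
    ∀ (k : ℕ) (q : ℕ → E), 0 < k → IsPath ie te k q →
      comp S k q '' F (te (q (k - 1))) ⊆ F (ie (q 0)) := by
  intro k
  induction k with
  | zero => omega
  | succ k IH =>
    intro q hk hp
    rcases Nat.eq_zero_or_pos k with hk0 | hk0
    · subst hk0
      simpa [comp, Set.image_comp] using edge_sub ie te S F hinv (q 0)
    · have h1 : comp S (k+1) q '' F (te (q k)) =
          comp S k q '' (S (q k) '' F (te (q k))) := by
        show (comp S k q ∘ S (q k)) '' _ = _
        rw [Set.image_comp]
      have h2 : S (q k) '' F (te (q k)) ⊆ F (te (q (k-1))) := by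
        have h3 : te (q (k-1)) = ie (q k) := by
          have h4 := hp (k-1) (by omega)
          have h5 : k - 1 + 1 = k := by omega
          rwa [h5] at h4
        rw [h3]
        exact edge_sub ie te S F hinv (q k)
      have h3 := IH q hk0 (fun i hi => hp i (by omega))
      simp only [Nat.add_sub_cancel]
      rw [h1]
      exact (Set.image_mono h2).trans h3

lemma cycle_through (ie te : E → V) (u : V)
    (hcyc : ∀ (k : ℕ) (q : ℕ → E), 0 < k →
      (∀ i, i + 1 < k → te (q i) = ie (q (i + 1))) →
      te (q (k - 1)) = ie (q 0) →
      (∀ i j, i < k → j < k → ie (q i) = ie (q j) → i = j) →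
      ∃ i < k, ie (q i) = u) :
    ∀ (k : ℕ) (q : ℕ → E), 0 < k → IsPath ie te k q → te (q (k - 1)) = ie (q 0) →
      ∃ i < k, ie (q i) = u := by
  intro k
  induction k using Nat.strong_induction_on with
  | _ k IH =>
    intro q hk hp hret
    by_cases hinj : ∀ i j, i < k → j < k → ie (q i) = ie (q j) → i = j
    · exact hcyc k q hk hp hret hinj
    · push_neg at hinj
      obtain ⟨i, j, hi, hj, heq, hne⟩ := hinj
      have key : ∀ a b : ℕ, a < b → b < k → ie (q a) = ie (q b) →
          ∃ i < k, ie (q i) = u := by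
        intro a b hab hbk habeq
        have hc : 0 < b - a := by omega
        have hpath : IsPath ie te (b - a) (fun l => q (a + l)) := by
          intro l hl
          have h4 := hp (a + l) (by omega)
          simpa [Nat.add_assoc] using h4
        have hret' : te ((fun l => q (a + l)) (b - a - 1)) = ie ((fun l => q (a + l)) 0) := by
          have h1 : a + (b - a - 1) = b - 1 := by omega
          simp only [h1, Nat.add_zero]
          have h4 := hp (b - 1) (by omega)
          have h5 : b - 1 + 1 = b := by omega
          rw [h5] at h4
          rw [h4, ← habeq]
        obtain ⟨l, hl, hlu⟩ := IH (b - a) (by omega) _ hc hpath hret'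
        exact ⟨a + l, by omega, hlu⟩
      rcases hne.lt_or_gt with h | h
      · exact key i j h hj heq
      · exact key j i h hi heq.symm

lemma expand (ie te : E → V) (S : E → ℝ → ℝ) (F : V → Set ℝ)
    (hinv : ∀ v, F v = ⋃ e ∈ {e : E | ie e = v}, S e '' F (te e))
    (u : V) :
    ∀ (m : ℕ) (x : ℝ), x ∈ F u →
      (∃ k q, 0 < k ∧ k ≤ m ∧ IsPath ie te k q ∧ ie (q 0) = u ∧ te (q (k - 1)) = u ∧
        x ∈ comp S k q '' F u) ∨
      (∃ q, IsPath ie te m q ∧ ie (q 0) = u ∧ (∀ i, i < m → te (q i) ≠ u) ∧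
        x ∈ comp S m q '' F (if m = 0 then ie (q 0) else te (q (m - 1)))) := by
  classical
  intro m
  induction m with
  | zero =>
    intro x hx
    right
    have hx' := hx
    rw [hinv u] at hx'
    simp only [Set.mem_iUnion, Set.mem_setOf_eq] at hx'
    obtain ⟨e, he, -⟩ := hx'
    refine ⟨fun _ => e, fun i hi => by omega, he, fun i hi => by omega, ?_⟩
    simpa [comp, he] using hx
  | succ m IH =>
    intro x hx
    rcases IH x hx with ⟨k, q, hk, hkm, hp, h0, hret, hmem⟩ | ⟨q, hp, h0, havoid, hmem⟩
    · exact Or.inl ⟨k, q, hk, by omega, hp, h0, hret, hmem⟩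
    · obtain ⟨y, hy, hxy⟩ := hmem
      set v := if m = 0 then ie (q 0) else te (q (m - 1)) with hv
      rw [hinv v] at hy
      simp only [Set.mem_iUnion, Set.mem_setOf_eq] at hy
      obtain ⟨e, hev, z, hz, hyz⟩ := hy
      set q' : ℕ → E := fun i => if i < m then q i else e with hq'
      have hq'lt : ∀ i, i < m → q' i = q i := by intro i hi; simp [hq', hi]
      have hq'm : q' m = e := by simp [hq']
      have hcomp : comp S m q' = comp S m q := comp_congr S m q' q hq'lt
      have hpath' : IsPath ie te (m + 1) q' := by
        intro i hi
        rcases Nat.lt_or_ge (i + 1) m with h1 | h1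
        · rw [hq'lt i (by omega), hq'lt (i+1) h1]
          exact hp i h1
        · have him : i + 1 = m := by omega
          rcases Nat.eq_zero_or_pos m with hm0 | hm0
          · omega
          · rw [hq'lt i (by omega), him, hq'm]
            have h5 : te (q i) = v := by
              rw [hv, if_neg (by omega)]
              have h6 : i = m - 1 := by omega
              rw [h6]
            rw [h5, hev]
      have h0' : ie (q' 0) = u := by
        rcases Nat.eq_zero_or_pos m with hm0 | hm0
        · have hq'0 : q' 0 = e := by rw [hq', hm0]; simp
          rw [hq'0, hev, hv, hm0]
          simpa using h0
        · rw [hq'lt 0 hm0]; exact h0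
      have hmem' : x ∈ comp S (m + 1) q' '' F (te e) := by
        refine ⟨z, hz, ?_⟩
        show (comp S m q' ∘ S (q' m)) z = x
        rw [hq'm, hcomp]
        simp only [Function.comp_apply]
        rw [hyz, hxy]
      by_cases hte : te e = u
      · left
        refine ⟨m + 1, q', by omega, le_refl _, hpath', h0', ?_, ?_⟩
        · simpa [hq'm] using hte
        · rwa [hte] at hmem'
      · right
        refine ⟨q', hpath', h0', ?_, ?_⟩
        · intro i hi
          rcases Nat.lt_or_ge i m with h1 | h1
          · rw [hq'lt i h1]; exact havoid i h1
          · have h5 : i = m := by omega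
            rw [h5, hq'm]; exact hte
        · simp only [Nat.add_sub_cancel, if_neg (Nat.succ_ne_zero m), hq'm]
          exact hmem'

lemma retword (ie te : E → V) (S : E → ℝ → ℝ) (F : V → Set ℝ)
    (hinv : ∀ v, F v = ⋃ e ∈ {e : E | ie e = v}, S e '' F (te e))
    (u : V)
    (hcyc : ∀ (k : ℕ) (q : ℕ → E), 0 < k →
      (∀ i, i + 1 < k → te (q i) = ie (q (i + 1))) →
      te (q (k - 1)) = ie (q 0) →
      (∀ i j, i < k → j < k → ie (q i) = ie (q j) → i = j) →
      ∃ i < k, ie (q i) = u)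
    (x : ℝ) (hx : x ∈ F u) :
    ∃ k q, 0 < k ∧ k ≤ Fintype.card V ∧ IsPath ie te k q ∧ ie (q 0) = u ∧
      te (q (k - 1)) = u ∧ x ∈ comp S k q '' F u := by
  classical
  set n := Fintype.card V with hn
  have hn0 : 0 < n := Fintype.card_pos_iff.mpr ⟨u⟩
  rcases expand ie te S F hinv u n x hx with ⟨k, q, hk, hkm, hp, h0, hret, hmem⟩ |
    ⟨q, hp, h0, havoid, hmem⟩
  · exact ⟨k, q, hk, hkm, hp, h0, hret, hmem⟩
  · exfalso
    set vv : ℕ → V := fun i => if i = 0 then u else te (q (i - 1)) with hvv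
    have vv0 : vv 0 = u := by simp [hvv]
    have vvp : ∀ i : ℕ, i ≠ 0 → vv i = te (q (i - 1)) := by
      intro i hi; simp [hvv, hi]
    have hcard : Fintype.card V < Fintype.card (Fin (n + 1)) := by simp [hn]
    obtain ⟨i, j, hij, heq⟩ :=
      Fintype.exists_ne_map_eq_of_card_lt (fun i : Fin (n + 1) => vv i) hcard
    have key : ∀ a b : ℕ, a < b → b ≤ n → vv a = vv b → False := by
      intro a b hab hbn habeq
      rcases Nat.eq_zero_or_pos a with ha0 | ha0
      · subst ha0
        have h5 : te (q (b - 1)) = u := by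
          rw [← vvp b (by omega), ← habeq, vv0]
        exact havoid (b - 1) (by omega) h5
      · have hia : ie (q a) = vv a := by
          have h4 := hp (a - 1) (by omega)
          have h5 : a - 1 + 1 = a := by omega
          rw [h5] at h4
          rw [← h4, vvp a (by omega)]
        have hc : 0 < b - a := by omega
        have hpath : IsPath ie te (b - a) (fun l => q (a + l)) := by
          intro l hl
          have h4 := hp (a + l) (by omega)
          simpa [Nat.add_assoc] using h4
        have hret' : te ((fun l => q (a + l)) (b - a - 1)) = ie ((fun l => q (a + l)) 0) := by
          have h1 : a + (b - a - 1) = b - 1 := by omega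
          simp only [h1, Nat.add_zero]
          rw [← vvp b (by omega), ← habeq, hia]
        obtain ⟨l, hl, hlu⟩ :=
          cycle_through ie te u hcyc (b - a) _ hc hpath hret'
        have h6 : te (q (a + l - 1)) = u := by
          have h4 := hp (a + l - 1) (by omega)
          have h5 : a + l - 1 + 1 = a + l := by omega
          rw [h5] at h4
          rwa [← h4] at hlu
        exact havoid (a + l - 1) (by omega) h6
    have hi' := i.isLt
    have hj' := j.isLt
    have hne' : (i : ℕ) ≠ (j : ℕ) := fun h => hij (Fin.ext h)
    rcases hne'.lt_or_gt with h | h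
    · exact key i j h (by omega) heq
    · exact key j i h (by omega) heq.symm

end DGIFSaux

/-- If every simple cycle of the (strongly connected) directed graph of an `n`-vertex
directed graph IFS on `ℝ` passes through the vertex `u`, then `F_u` is the attractor of
a standard (1-vertex) IFS: a finite union of images of itself under contracting
similarities. -/
theorem component_is_standard_attractor_of_cycles_through_u
    {V E : Type*} [Fintype V] [Fintype E]
    (ie te : E → V) (S : E → ℝ → ℝ)
    (hsim : ∀ e, ∃ r : ℝ, 0 < r ∧ r < 1 ∧ ∀ x y : ℝ, dist (S e x) (S e y) = r * dist x y)
    (hout : ∀ v : V, ∃ e : E, ie e = v)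
    (hconn : ∀ v w : V, Relation.ReflTransGen (fun p q => ∃ e : E, ie e = p ∧ te e = q) v w)
    (F : V → Set ℝ)
    (hne : ∀ v, (F v).Nonempty) (hcpt : ∀ v, IsCompact (F v))
    (hinv : ∀ v, F v = ⋃ e ∈ {e : E | ie e = v}, S e '' F (te e))
    (u : V)
    (hcyc : ∀ (k : ℕ) (q : ℕ → E), 0 < k →
      (∀ i, i + 1 < k → te (q i) = ie (q (i + 1))) →
      te (q (k - 1)) = ie (q 0) →
      (∀ i j, i < k → j < k → ie (q i) = ie (q j) → i = j) →
      ∃ i < k, ie (q i) = u) :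
    ∃ (m : ℕ) (T : Fin m → ℝ → ℝ), 0 < m ∧
      (∀ j, ∃ r : ℝ, 0 < r ∧ r < 1 ∧ ∀ x y : ℝ, dist (T j x) (T j y) = r * dist x y) ∧
      F u = ⋃ j, T j '' F u := by
  classical
  open DGIFSaux in
  set n := Fintype.card V with hn
  have hn0 : 0 < n := Fintype.card_pos_iff.mpr ⟨u⟩
  obtain ⟨e₀, he₀⟩ := hout u
  haveI : Nonempty E := ⟨e₀⟩
  set J := Fin n × (Fin n → E) with hJ
  set len : J → ℕ := fun p => (p.1 : ℕ) + 1 with hlendef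
  set word : J → ℕ → E := fun p => extW n hn0 p.2 with hworddef
  set Valid : J → Prop := fun p =>
    IsPath ie te (len p) (word p) ∧ ie (word p 0) = u ∧ te (word p (len p - 1)) = u
    with hValiddef
  have hlen : ∀ p : J, 0 < len p ∧ len p ≤ n := by
    intro p
    have := p.1.isLt
    constructor
    · simp [hlendef]
    · simp [hlendef]
  -- from a return word, get a valid index computing the same map
  have toIdx : ∀ (k : ℕ) (q : ℕ → E), 0 < k → k ≤ n → IsPath ie te k q →
      ie (q 0) = u → te (q (k - 1)) = u →
      ∃ p : J, Valid p ∧ comp S (len p) (word p) = comp S k q := by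
    intro k q hk hkn hp h0 hret
    set p : J := (⟨k - 1, by omega⟩, fun i : Fin n => q i) with hpdef
    have hl : len p = k := by simp [hlendef, hpdef]; omega
    have hw : ∀ i, i < k → word p i = q i := by
      intro i hi
      have : word p i = extW n hn0 (fun j : Fin n => q j) i := by rw [hworddef]
      rw [this, extW_lt n hn0 q i (by omega)]
    refine ⟨p, ⟨?_, ?_, ?_⟩, ?_⟩
    · intro i hi
      rw [hl] at hi
      rw [hw i (by omega), hw (i+1) (by omega)]
      exact hp i hi
    · rw [hw 0 (by omega)]; exact h0
    · rw [hl, hw (k-1) (by omega)]; exact hret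
    · rw [hl]
      exact comp_congr S k _ _ hw
  -- a default valid index
  obtain ⟨x₀, hx₀⟩ := hne u
  obtain ⟨k₀, q₀, hk₀, hk₀n, hp₀, h0₀, hret₀, -⟩ :=
    retword ie te S F hinv u hcyc x₀ hx₀
  obtain ⟨p₀, hp₀v, -⟩ := toIdx k₀ q₀ hk₀ hk₀n hp₀ h0₀ hret₀
  set Tp : J → ℝ → ℝ := fun p => if Valid p then comp S (len p) (word p)
    else comp S (len p₀) (word p₀) with hTpdef
  have hTp_pos : ∀ p : J, Valid p → Tp p = comp S (len p) (word p) := by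
    intro p h; rw [hTpdef]; simp only [if_pos h]
  have hTp_neg : ∀ p : J, ¬ Valid p → Tp p = comp S (len p₀) (word p₀) := by
    intro p h; rw [hTpdef]; simp only [if_neg h]
  have hTp : ∀ p : J, ∃ p' : J, Valid p' ∧ Tp p = comp S (len p') (word p') := by
    intro p
    by_cases h : Valid p
    · exact ⟨p, h, hTp_pos p h⟩
    · exact ⟨p₀, hp₀v, hTp_neg p h⟩
  have hsub : ∀ p' : J, Valid p' → comp S (len p') (word p') '' F u ⊆ F u := by
    intro p' hv
    obtain ⟨hpa, hpb, hpc⟩ := hv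
    have h := comp_maps ie te S F hinv (len p') (word p') (hlen p').1 hpa
    rw [hpc, hpb] at h
    exact h
  have hcon : ∀ p : J, ∃ r : ℝ, 0 < r ∧ r < 1 ∧
      ∀ x y : ℝ, dist (Tp p x) (Tp p y) = r * dist x y := by
    intro p
    obtain ⟨p', hp', hTeq⟩ := hTp p
    obtain ⟨r, hr0, _, hr1, hr⟩ := comp_ratio S hsim (len p') (word p')
    refine ⟨r, hr0, hr1 (hlen p').1, fun x y => ?_⟩
    rw [hTeq]; exact hr x y
  haveI : Nonempty J := ⟨(⟨0, hn0⟩, fun _ => e₀)⟩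
  refine ⟨Fintype.card J, fun j => Tp ((Fintype.equivFin J).symm j), Fintype.card_pos,
    fun j => hcon _, ?_⟩
  apply Set.Subset.antisymm
  · intro x hx
    obtain ⟨k, q, hk, hkn, hp, h0, hret, hmem⟩ :=
      retword ie te S F hinv u hcyc x hx
    obtain ⟨p, hpv, hpe⟩ := toIdx k q hk hkn hp h0 hret
    rw [Set.mem_iUnion]
    refine ⟨Fintype.equivFin J p, ?_⟩
    show x ∈ Tp ((Fintype.equivFin J).symm (Fintype.equivFin J p)) '' F u
    rw [Equiv.symm_apply_apply, hTp_pos p hpv, hpe]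
    exact hmem
  · intro x hx
    rw [Set.mem_iUnion] at hx
    obtain ⟨j, hj⟩ := hx
    have hj' : x ∈ Tp ((Fintype.equivFin J).symm j) '' F u := hj
    obtain ⟨p', hp', hTeq⟩ := hTp ((Fintype.equivFin J).symm j)
    rw [hTeq] at hj'
    exact hsub p' hp' hj'
end

section
/- For the 2-vertex IFS attractor (F_u, F_v) with parameters a, b, c, d, g_u, g_v (positive, a+g_u+b=1, c+g_v+d=1): the maximum gap length of F_u is max{g_u, b·g_v}, and the maximum gap length of F_v is max{g_v, d·g_u}. -/
/-- The set of gap lengths of `A ⊆ ℝ`. -/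
def gapLengths (A : Set ℝ) : Set ℝ :=
  {l | ∃ p q : ℝ, p ∈ A ∧ q ∈ A ∧ p < q ∧ Set.Ioo p q ∩ A = ∅ ∧ l = q - p}

lemma gapLengths_pos {A : Set ℝ} {L : ℝ} (h : L ∈ gapLengths A) : 0 < L := by
  obtain ⟨p, q, _, _, hpq, _, rfl⟩ := h; linarith

lemma gapLengths_le_one {A : Set ℝ} (hA : A ⊆ Set.Icc 0 1) {L : ℝ}
    (h : L ∈ gapLengths A) : L ≤ 1 := by
  obtain ⟨p, q, hp, hq, hpq, _, rfl⟩ := h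
  have h1 := hA hp; have h2 := hA hq
  simp only [Set.mem_Icc] at h1 h2
  linarith [h1.1, h2.2]

/-- The split of the attractor into two pieces. -/
lemma attractor_split {a b g : ℝ} (ha : 0 < a) (hb : 0 < b) (hg : 0 < g)
    {A B : Set ℝ} (hA : A ⊆ Set.Icc 0 1) (hB : B ⊆ Set.Icc 0 1)
    (hinv : A = (fun x => a * x) '' A ∪ (fun x => b * x + (a + g)) '' B)
    {x : ℝ} (hx : x ∈ A) : x ≤ a ∨ a + g ≤ x := by
  rw [hinv] at hx
  rcases hx with ⟨y, hy, rfl⟩ | ⟨y, hy, rfl⟩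
  · left
    show a * y ≤ a
    have h1 := (hA hy).2
    nlinarith [(hA hy).1]
  · right
    show a + g ≤ b * y + (a + g)
    have h1 := (hB hy).1
    nlinarith

/-- The level-1 gap `[a, a+g]` gives gap length `g`. -/
lemma gap_mem_level1 {a b g : ℝ} (ha : 0 < a) (hb : 0 < b) (hg : 0 < g)
    {A B : Set ℝ} (hA : A ⊆ Set.Icc 0 1) (hB : B ⊆ Set.Icc 0 1)
    (h1A : (1:ℝ) ∈ A) (h0B : (0:ℝ) ∈ B)
    (hinv : A = (fun x => a * x) '' A ∪ (fun x => b * x + (a + g)) '' B) :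
    g ∈ gapLengths A := by
  refine ⟨a, a + g, ?_, ?_, by linarith, ?_, by ring⟩
  · rw [hinv]; exact Or.inl ⟨1, h1A, by norm_num⟩
  · rw [hinv]; exact Or.inr ⟨0, h0B, by norm_num⟩
  · rw [Set.eq_empty_iff_forall_notMem]
    rintro x ⟨⟨hx1, hx2⟩, hxA⟩
    rcases attractor_split ha hb hg hA hB hinv hxA with h | h <;> linarith

/-- A gap of `B` rescales to a gap of `A` of `b` times the length. -/
lemma gap_mem_scale {a b g : ℝ} (ha : 0 < a) (hb : 0 < b) (hg : 0 < g)
    {A B : Set ℝ} (hA : A ⊆ Set.Icc 0 1) (hB : B ⊆ Set.Icc 0 1)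
    (hinv : A = (fun x => a * x) '' A ∪ (fun x => b * x + (a + g)) '' B)
    {l : ℝ} (hl : l ∈ gapLengths B) : b * l ∈ gapLengths A := by
  obtain ⟨p, q, hp, hq, hpq, hgap, rfl⟩ := hl
  rw [Set.eq_empty_iff_forall_notMem] at hgap
  refine ⟨b * p + (a + g), b * q + (a + g), ?_, ?_, by nlinarith, ?_, by ring⟩
  · rw [hinv]; exact Or.inr ⟨p, hp, rfl⟩
  · rw [hinv]; exact Or.inr ⟨q, hq, rfl⟩
  · rw [Set.eq_empty_iff_forall_notMem]
    rintro x ⟨⟨hx1, hx2⟩, hxA⟩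
    rw [hinv] at hxA
    rcases hxA with ⟨y, hy, rfl⟩ | ⟨y, hy, rfl⟩
    · replace hx1 : b * p + (a + g) < a * y := hx1
      replace hx2 : a * y < b * q + (a + g) := hx2
      have h1 := (hA hy).2
      have h2 := (hB hp).1
      nlinarith
    · replace hx1 : b * p + (a + g) < b * y + (a + g) := hx1
      replace hx2 : b * y + (a + g) < b * q + (a + g) := hx2
      exact hgap y ⟨⟨by nlinarith, by nlinarith⟩, hy⟩

/-- Case analysis on a gap of the attractor. -/
lemma gap_cases_s13 {a b g : ℝ} (ha : 0 < a) (hb : 0 < b) (hg : 0 < g)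
    {A B : Set ℝ} (hA : A ⊆ Set.Icc 0 1) (hB : B ⊆ Set.Icc 0 1)
    (h1A : (1:ℝ) ∈ A) (h0B : (0:ℝ) ∈ B)
    (hinv : A = (fun x => a * x) '' A ∪ (fun x => b * x + (a + g)) '' B)
    {L : ℝ} (hL : L ∈ gapLengths A) :
    L = g ∨ (∃ L' ∈ gapLengths A, L = a * L') ∨ (∃ L' ∈ gapLengths B, L = b * L') := by
  obtain ⟨p, q, hp, hq, hpq, hgap, rfl⟩ := hL
  rw [Set.eq_empty_iff_forall_notMem] at hgap
  have haA : a ∈ A := by rw [hinv]; exact Or.inl ⟨1, h1A, by norm_num⟩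
  have hagA : a + g ∈ A := by rw [hinv]; exact Or.inr ⟨0, h0B, by norm_num⟩
  by_cases hq_le : q ≤ a
  · -- both endpoints in a·A; pull back
    right; left
    have getmem : ∀ x ∈ A, x ≤ a → x ∈ (fun x => a * x) '' A := by
      intro x hx hxa
      rw [hinv] at hx
      rcases hx with h | ⟨y, hy, rfl⟩
      · exact h
      · exfalso
        replace hxa : b * y + (a + g) ≤ a := hxa
        have := (hB hy).1; nlinarith
    obtain ⟨p', hp', hpe⟩ := getmem p hp (le_of_lt (lt_of_lt_of_le hpq hq_le))
    obtain ⟨q', hq', hqe⟩ := getmem q hq hq_le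
    simp only at hpe hqe
    subst hpe; subst hqe
    have hpq' : p' < q' := by nlinarith
    refine ⟨q' - p', ⟨p', q', hp', hq', hpq', ?_, rfl⟩, by ring⟩
    rw [Set.eq_empty_iff_forall_notMem]
    rintro x ⟨⟨hx1, hx2⟩, hxA⟩
    refine hgap (a * x) ⟨⟨by nlinarith, by nlinarith⟩, ?_⟩
    rw [hinv]; exact Or.inl ⟨x, hxA, rfl⟩
  · push_neg at hq_le
    have hq_ge : a + g ≤ q := by
      rcases attractor_split ha hb hg hA hB hinv hq with h | h
      · linarith
      · exact h
    by_cases hp_ge : a + g ≤ p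
    · -- both endpoints in b·B + (a+g); pull back
      right; right
      have getmem : ∀ x ∈ A, a + g ≤ x → x ∈ (fun x => b * x + (a + g)) '' B := by
        intro x hx hxa
        rw [hinv] at hx
        rcases hx with ⟨y, hy, rfl⟩ | h
        · exfalso
          replace hxa : a + g ≤ a * y := hxa
          have h1 := (hA hy).2; nlinarith
        · exact h
      obtain ⟨p', hp', hpe⟩ := getmem p hp hp_ge
      obtain ⟨q', hq', hqe⟩ := getmem q hq (le_trans hp_ge (le_of_lt hpq))
      simp only at hpe hqe
      subst hpe; subst hqe
      have hpq' : p' < q' := by nlinarith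
      refine ⟨q' - p', ⟨p', q', hp', hq', hpq', ?_, rfl⟩, by ring⟩
      rw [Set.eq_empty_iff_forall_notMem]
      rintro x ⟨⟨hx1, hx2⟩, hxB⟩
      refine hgap (b * x + (a + g)) ⟨⟨by nlinarith, by nlinarith⟩, ?_⟩
      rw [hinv]; exact Or.inr ⟨x, hxB, rfl⟩
    · -- the gap is exactly [a, a+g]
      push_neg at hp_ge
      have hp_le : p ≤ a := by
        rcases attractor_split ha hb hg hA hB hinv hp with h | h
        · exact h
        · linarith
      left
      have h1 : a ≤ p := by
        by_contra h; push_neg at h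
        exact hgap a ⟨⟨h, hq_le⟩, haA⟩
      have h2 : q ≤ a + g := by
        by_contra h; push_neg at h
        exact hgap (a + g) ⟨⟨by linarith, h⟩, hagA⟩
      have : p = a := le_antisymm hp_le h1
      have : q = a + g := le_antisymm h2 hq_ge
      linarith

/-- The maximum gap length of `F_u` is `max{g_u, b·g_v}` and that of `F_v` is
`max{g_v, d·g_u}`. -/
theorem two_vertex_attractor_max_gap
    (a b c d gu gv : ℝ)
    (ha : 0 < a) (hb : 0 < b) (hc : 0 < c) (hd : 0 < d)
    (hgu : 0 < gu) (hgv : 0 < gv)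
    (hsum1 : a + gu + b = 1) (hsum2 : c + gv + d = 1)
    (Fu Fv : Set ℝ)
    (hFune : Fu.Nonempty) (hFucpt : IsCompact Fu)
    (hFvne : Fv.Nonempty) (hFvcpt : IsCompact Fv)
    (hFu0 : (0:ℝ) ∈ Fu) (hFu1 : (1:ℝ) ∈ Fu) (hFusub : Fu ⊆ Set.Icc 0 1)
    (hFv0 : (0:ℝ) ∈ Fv) (hFv1 : (1:ℝ) ∈ Fv) (hFvsub : Fv ⊆ Set.Icc 0 1)
    (hinvu : Fu = (fun x => a * x) '' Fu ∪ (fun x => b * x + (a + gu)) '' Fv)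
    (hinvv : Fv = (fun x => c * x) '' Fv ∪ (fun x => d * x + (c + gv)) '' Fu) :
    IsGreatest (gapLengths Fu) (max gu (b * gv)) ∧
    IsGreatest (gapLengths Fv) (max gv (d * gu)) := by
  set Mu := max gu (b * gv) with hMu
  set Mv := max gv (d * gu) with hMv
  set ρ := max (max a b) (max c d) with hρ
  have ha1 : a < 1 := by linarith
  have hb1 : b < 1 := by linarith
  have hc1 : c < 1 := by linarith
  have hd1 : d < 1 := by linarith
  have hρ1 : ρ < 1 := by
    rw [hρ]; exact max_lt (max_lt ha1 hb1) (max_lt hc1 hd1)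
  have haρ : a ≤ ρ := le_trans (le_max_left a b) (le_max_left _ _)
  have hbρ : b ≤ ρ := le_trans (le_max_right a b) (le_max_left _ _)
  have hcρ : c ≤ ρ := le_trans (le_max_left c d) (le_max_right _ _)
  have hdρ : d ≤ ρ := le_trans (le_max_right c d) (le_max_right _ _)
  have hbMv : b * Mv ≤ Mu := by
    rw [hMv, hMu]
    rcases max_cases gv (d * gu) with ⟨h, _⟩ | ⟨h, _⟩ <;> rw [h]
    · exact le_max_right _ _
    · have : b * (d * gu) ≤ gu := by nlinarith
      exact le_trans this (le_max_left _ _)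
  have hdMu : d * Mu ≤ Mv := by
    rw [hMv, hMu]
    rcases max_cases gu (b * gv) with ⟨h, _⟩ | ⟨h, _⟩ <;> rw [h]
    · exact le_max_right _ _
    · have : d * (b * gv) ≤ gv := by nlinarith
      exact le_trans this (le_max_left _ _)
  have key : ∀ n : ℕ, (∀ L ∈ gapLengths Fu, L ≤ max Mu (ρ ^ n)) ∧
      (∀ L ∈ gapLengths Fv, L ≤ max Mv (ρ ^ n)) := by
    intro n
    induction n with
    | zero =>
      constructor <;> intro L hL <;> rw [pow_zero]
      · exact le_max_of_le_right (gapLengths_le_one hFusub hL)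
      · exact le_max_of_le_right (gapLengths_le_one hFvsub hL)
    | succ n ih =>
      have hρn : (0:ℝ) ≤ ρ ^ n := pow_nonneg (by positivity) n
      constructor
      · intro L hL
        rcases gap_cases_s13 ha hb hgu hFusub hFvsub hFu1 hFv0 hinvu hL with
          h | ⟨L', hL', rfl⟩ | ⟨L', hL', rfl⟩
        · exact le_max_of_le_left (h ▸ le_max_left _ _)
        · have hL'pos := gapLengths_pos hL'
          rcases le_max_iff.mp (ih.1 L' hL') with h | h
          · exact le_max_of_le_left (by nlinarith)
          · refine le_max_of_le_right ?_
            rw [pow_succ]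
            nlinarith
        · have hL'pos := gapLengths_pos hL'
          rcases le_max_iff.mp (ih.2 L' hL') with h | h
          · exact le_max_of_le_left (le_trans (by nlinarith) hbMv)
          · refine le_max_of_le_right ?_
            rw [pow_succ]
            nlinarith
      · intro L hL
        rcases gap_cases_s13 hc hd hgv hFvsub hFusub hFv1 hFu0 hinvv hL with
          h | ⟨L', hL', rfl⟩ | ⟨L', hL', rfl⟩
        · exact le_max_of_le_left (h ▸ le_max_left _ _)
        · have hL'pos := gapLengths_pos hL'
          rcases le_max_iff.mp (ih.2 L' hL') with h | h
          · exact le_max_of_le_left (by nlinarith)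
          · refine le_max_of_le_right ?_
            rw [pow_succ]
            nlinarith
        · have hL'pos := gapLengths_pos hL'
          rcases le_max_iff.mp (ih.1 L' hL') with h | h
          · exact le_max_of_le_left (le_trans (by nlinarith) hdMu)
          · refine le_max_of_le_right ?_
            rw [pow_succ]
            nlinarith
  have ubu : ∀ L ∈ gapLengths Fu, L ≤ Mu := by
    intro L hL
    by_contra h; push_neg at h
    have hpos := gapLengths_pos hL
    obtain ⟨n, hn⟩ := exists_pow_lt_of_lt_one hpos hρ1
    rcases le_max_iff.mp ((key n).1 L hL) with h' | h' <;> linarith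
  have ubv : ∀ L ∈ gapLengths Fv, L ≤ Mv := by
    intro L hL
    by_contra h; push_neg at h
    have hpos := gapLengths_pos hL
    obtain ⟨n, hn⟩ := exists_pow_lt_of_lt_one hpos hρ1
    rcases le_max_iff.mp ((key n).2 L hL) with h' | h' <;> linarith
  have hguMem : gu ∈ gapLengths Fu :=
    gap_mem_level1 ha hb hgu hFusub hFvsub hFu1 hFv0 hinvu
  have hgvMem : gv ∈ gapLengths Fv :=
    gap_mem_level1 hc hd hgv hFvsub hFusub hFv1 hFu0 hinvv
  have memu : Mu ∈ gapLengths Fu := by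
    rcases max_cases gu (b * gv) with ⟨h, _⟩ | ⟨h, _⟩ <;> rw [hMu, h]
    · exact hguMem
    · exact gap_mem_scale ha hb hgu hFusub hFvsub hinvu hgvMem
  have memv : Mv ∈ gapLengths Fv := by
    rcases max_cases gv (d * gu) with ⟨h, _⟩ | ⟨h, _⟩ <;> rw [hMv, h]
    · exact hgvMem
    · exact gap_mem_scale hc hd hgv hFvsub hFusub hinvv hguMem
  exact ⟨⟨memu, ubu⟩, ⟨memv, ubv⟩⟩
end

section
/- Let F ⊆ [0,1] be compact with {0,1} ⊆ F, and suppose m = max G(F) (the maximum gap length of F) exists. Let S(x) = r·x + t with 0 < r < 1 be a similarity such that S(F) ⊆ F. If [p, q] is a gap interval of F with [p,q] ⊆ S([0,1]) then q − p ≤ r·m. -/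
/-- If `S(F) ⊆ F` for a similarity `S(x) = r·x + t` with ratio `r ∈ (0,1)`, `F ⊆ [0,1]`
compact containing `0,1` with maximum gap length `m`, then any gap interval `[p,q]` of `F`
contained in `S([0,1])` has length at most `r·m`. -/
theorem gap_in_image_le
    (F : Set ℝ) (hcpt : IsCompact F) (hsub : F ⊆ Set.Icc 0 1)
    (h0 : (0:ℝ) ∈ F) (h1 : (1:ℝ) ∈ F)
    (m : ℝ)
    (hm : IsGreatest {l : ℝ | ∃ p q : ℝ, p ∈ F ∧ q ∈ F ∧ p < q ∧
      Set.Ioo p q ∩ F = ∅ ∧ l = q - p} m)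
    (r t : ℝ) (hr0 : 0 < r) (hr1 : r < 1)
    (hSF : (fun x => r * x + t) '' F ⊆ F)
    (p q : ℝ) (hp : p ∈ F) (hq : q ∈ F) (hpq : p < q)
    (hgap : Set.Ioo p q ∩ F = ∅)
    (hspan : Set.Icc p q ⊆ (fun x => r * x + t) '' Set.Icc 0 1) :
    q - p ≤ r * m := by
  -- preimages of p and q under S
  obtain ⟨a, ha01, hap⟩ := hspan ⟨le_refl p, hpq.le⟩
  obtain ⟨b, hb01, hbq⟩ := hspan ⟨hpq.le, le_refl q⟩
  simp only at hap hbq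
  have hab : a < b := by nlinarith [hap, hbq]
  -- greatest element of F ∩ [0,a]
  have hA : IsCompact (F ∩ Set.Icc 0 a) := hcpt.inter_right isClosed_Icc
  have hAne : (F ∩ Set.Icc 0 a).Nonempty := ⟨0, h0, le_refl 0, ha01.1⟩
  obtain ⟨a', ha'mem, ha'ub⟩ := hA.exists_isGreatest hAne
  -- least element of F ∩ [b,1]
  have hB : IsCompact (F ∩ Set.Icc b 1) := hcpt.inter_right isClosed_Icc
  have hBne : (F ∩ Set.Icc b 1).Nonempty := ⟨1, h1, hb01.2, le_refl 1⟩
  obtain ⟨b', hb'mem, hb'lb⟩ := hB.exists_isLeast hBne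
  have ha'F : a' ∈ F := ha'mem.1
  have hb'F : b' ∈ F := hb'mem.1
  have ha'a : a' ≤ a := ha'mem.2.2
  have hbb' : b ≤ b' := hb'mem.2.1
  have ha'b' : a' < b' := lt_of_le_of_lt ha'a (lt_of_lt_of_le hab hbb')
  -- (a', b') is a gap of F
  have hgap' : Set.Ioo a' b' ∩ F = ∅ := by
    ext x
    simp only [Set.mem_inter_iff, Set.mem_Ioo, Set.mem_empty_iff_false, iff_false]
    rintro ⟨⟨hxa', hxb'⟩, hxF⟩
    have hx01 : x ∈ Set.Icc (0:ℝ) 1 := hsub hxF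
    rcases le_or_gt x a with hxa | hax
    · exact absurd (ha'ub ⟨hxF, hx01.1, hxa⟩) (not_le.mpr hxa')
    rcases le_or_gt b x with hbx | hxb
    · exact absurd (hb'lb ⟨hxF, hbx, hx01.2⟩) (not_le.mpr hxb')
    -- a < x < b : then S x ∈ F ∩ (p,q), contradiction
    have hSx : r * x + t ∈ F := hSF ⟨x, hxF, rfl⟩
    have h1' : p < r * x + t := by nlinarith [hap]
    have h2' : r * x + t < q := by nlinarith [hbq]
    have : (r * x + t) ∈ Set.Ioo p q ∩ F := ⟨⟨h1', h2'⟩, hSx⟩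
    rw [hgap] at this
    exact this
  have hle : b' - a' ≤ m := hm.2 ⟨a', b', ha'F, hb'F, ha'b', hgap', rfl⟩
  nlinarith [hap, hbq]
end

section
/- For the 2-vertex IFS attractor (F_u, F_v) of Figure 1, if S : ℝ → ℝ is an orientation-preserving contracting similarity with ratio r ∈ (0,1) such that S(F_u) ⊆ F_u and S([0,1]) spans the level-1 gap (i.e., [a, a+g_u] ⊆ S([0,1])), then g_u < b·g_v. -/
set_option maxHeartbeats 1000000

/-- If an orientation-preserving contracting similarity `S` maps `F_u` into `F_u` and
`S([0,1])` spans the level-1 gap `[a, a+g_u]`, then `g_u < b·g_v`. -/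
theorem span_gap_self_implies
    (a b c d gu gv : ℝ)
    (ha : 0 < a) (hb : 0 < b) (hc : 0 < c) (hd : 0 < d)
    (hgu : 0 < gu) (hgv : 0 < gv)
    (hsum1 : a + gu + b = 1) (hsum2 : c + gv + d = 1)
    (Fu Fv : Set ℝ)
    (hFune : Fu.Nonempty) (hFucpt : IsCompact Fu)
    (hFvne : Fv.Nonempty) (hFvcpt : IsCompact Fv)
    (hFu0 : (0:ℝ) ∈ Fu) (hFu1 : (1:ℝ) ∈ Fu) (hFusub : Fu ⊆ Set.Icc 0 1)
    (hFv0 : (0:ℝ) ∈ Fv) (hFv1 : (1:ℝ) ∈ Fv) (hFvsub : Fv ⊆ Set.Icc 0 1)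
    (hinvu : Fu = (fun x => a * x) '' Fu ∪ (fun x => b * x + (a + gu)) '' Fv)
    (hinvv : Fv = (fun x => c * x) '' Fv ∪ (fun x => d * x + (c + gv)) '' Fu)
    (r t : ℝ) (hr0 : 0 < r) (hr1 : r < 1)
    (hSF : (fun x => r * x + t) '' Fu ⊆ Fu)
    (hspan : Set.Icc a (a + gu) ⊆ (fun x => r * x + t) '' Set.Icc 0 1) :
    gu < b * gv := by
  have ha1 : a < 1 := by linarith
  have hb1 : b < 1 := by linarith
  have hc1 : c < 1 := by linarith
  have hd1 : d < 1 := by linarith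
  set ρ : ℝ := max (max a b) (max c d) with hρdef
  have hρ1 : ρ < 1 := max_lt (max_lt ha1 hb1) (max_lt hc1 hd1)
  have haρ : a ≤ ρ := le_trans (le_max_left a b) (le_max_left _ _)
  have hbρ : b ≤ ρ := le_trans (le_max_right a b) (le_max_left _ _)
  have hcρ : c ≤ ρ := le_trans (le_max_left c d) (le_max_right _ _)
  have hdρ : d ≤ ρ := le_trans (le_max_right c d) (le_max_right _ _)
  have hρ0 : 0 < ρ := lt_of_lt_of_le ha haρ
  have hmemu_a : ∀ q ∈ Fu, a * q ∈ Fu := by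
    intro q hq; rw [hinvu]; exact Or.inl ⟨q, hq, rfl⟩
  have hmemu_b : ∀ q ∈ Fv, b * q + (a + gu) ∈ Fu := by
    intro q hq; rw [hinvu]; exact Or.inr ⟨q, hq, rfl⟩
  have hmemv_c : ∀ q ∈ Fv, c * q ∈ Fv := by
    intro q hq; rw [hinvv]; exact Or.inl ⟨q, hq, rfl⟩
  have hmemv_d : ∀ q ∈ Fu, d * q + (c + gv) ∈ Fv := by
    intro q hq; rw [hinvv]; exact Or.inr ⟨q, hq, rfl⟩
  have ha_mem : a ∈ Fu := by have := hmemu_a 1 hFu1; simpa using this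
  have hagu_mem : a + gu ∈ Fu := by have := hmemu_b 0 hFv0; simpa using this
  have hc_mem : c ∈ Fv := by have := hmemv_c 1 hFv1; simpa using this
  have hcgv_mem : c + gv ∈ Fv := by have := hmemv_d 0 hFu0; simpa using this
  have hGu0 : (0:ℝ) < max gu (b*gv) := lt_of_lt_of_le hgu (le_max_left _ _)
  -- mutual density lemma
  have key : ∀ n : ℕ,
      (∀ x y : ℝ, 0 ≤ x → y ≤ 1 → max gu (b*gv) ≤ y - x → ρ^n < y - x →
        ∃ q ∈ Fu, x ≤ q ∧ q ≤ y) ∧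
      (∀ x y : ℝ, 0 ≤ x → y ≤ 1 → max gv (d*gu) ≤ y - x → ρ^n < y - x →
        ∃ q ∈ Fv, x ≤ q ∧ q ≤ y) := by
    intro n
    induction n with
    | zero =>
      constructor <;> intro x y hx hy hM hlen <;> simp only [pow_zero] at hlen <;> linarith
    | succ n ih =>
      obtain ⟨ihu, ihv⟩ := ih
      have hpow : ρ ^ (n+1) = ρ ^ n * ρ := pow_succ ρ n
      have hpn : 0 < ρ ^ n := pow_pos hρ0 n
      constructor
      · intro x y hx hy hM hlen
        have hMgu : gu ≤ y - x := le_trans (le_max_left gu (b*gv)) hM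
        have hMbgv : b*gv ≤ y - x := le_trans (le_max_right gu (b*gv)) hM
        by_cases hya : y < a
        · -- pull back through S₁ : x ↦ a x
          have hM' : max gu (b*gv) ≤ y/a - x/a := by
            rw [div_sub_div_same, le_div_iff₀ ha]
            nlinarith
          have hlen' : ρ^n < y/a - x/a := by
            rw [div_sub_div_same, lt_div_iff₀ ha]
            nlinarith
          obtain ⟨q, hq, h1, h2⟩ := ihu (x/a) (y/a) (div_nonneg hx ha.le)
            (by rw [div_le_one ha]; linarith) hM' hlen'
          have h1' := (div_le_iff₀ ha).mp h1
          have h2' := (le_div_iff₀ ha).mp h2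
          exact ⟨a*q, hmemu_a q hq, by linarith [mul_comm q a], by linarith [mul_comm q a]⟩
        · by_cases hxb : a + gu < x
          · -- pull back through S₂ : x ↦ b x + (a+gu)
            have he : (y-(a+gu))/b - (x-(a+gu))/b = (y-x)/b := by ring
            have hM' : max gv (d*gu) ≤ (y-(a+gu))/b - (x-(a+gu))/b := by
              rw [he]
              have h1 : gv ≤ (y-x)/b := by
                rw [le_div_iff₀ hb]
                nlinarith
              have h2 : d*gu ≤ (y-x)/b := by
                rw [le_div_iff₀ hb]
                have hdb : d*b < 1 := by nlinarith
                nlinarith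
              exact max_le h1 h2
            have hlen' : ρ^n < (y-(a+gu))/b - (x-(a+gu))/b := by
              rw [he, lt_div_iff₀ hb]
              nlinarith
            obtain ⟨q, hq, h1, h2⟩ := ihv ((x-(a+gu))/b) ((y-(a+gu))/b)
              (div_nonneg (by linarith) hb.le)
              (by rw [div_le_one hb]; linarith) hM' hlen'
            have h1' := (div_le_iff₀ hb).mp h1
            have h2' := (le_div_iff₀ hb).mp h2
            exact ⟨b*q + (a+gu), hmemu_b q hq, by linarith [mul_comm q b], by linarith [mul_comm q b]⟩
          · by_cases hxa : x ≤ a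
            · exact ⟨a, ha_mem, hxa, by linarith [not_lt.mp hya]⟩
            · by_cases hy2 : a + gu ≤ y
              · exact ⟨a + gu, hagu_mem, not_lt.mp hxb, hy2⟩
              · exfalso
                push_neg at hya hxa hy2
                linarith
      · intro x y hx hy hM hlen
        have hMgv : gv ≤ y - x := le_trans (le_max_left gv (d*gu)) hM
        have hMdgu : d*gu ≤ y - x := le_trans (le_max_right gv (d*gu)) hM
        by_cases hyc : y < c
        · have hM' : max gv (d*gu) ≤ y/c - x/c := by
            rw [div_sub_div_same, le_div_iff₀ hc]
            nlinarith
          have hlen' : ρ^n < y/c - x/c := by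
            rw [div_sub_div_same, lt_div_iff₀ hc]
            nlinarith
          obtain ⟨q, hq, h1, h2⟩ := ihv (x/c) (y/c) (div_nonneg hx hc.le)
            (by rw [div_le_one hc]; linarith) hM' hlen'
          have h1' := (div_le_iff₀ hc).mp h1
          have h2' := (le_div_iff₀ hc).mp h2
          exact ⟨c*q, hmemv_c q hq, by linarith [mul_comm q c], by linarith [mul_comm q c]⟩
        · by_cases hxd : c + gv < x
          · have he : (y-(c+gv))/d - (x-(c+gv))/d = (y-x)/d := by ring
            have hM' : max gu (b*gv) ≤ (y-(c+gv))/d - (x-(c+gv))/d := by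
              rw [he]
              have h1 : gu ≤ (y-x)/d := by
                rw [le_div_iff₀ hd]
                nlinarith
              have h2 : b*gv ≤ (y-x)/d := by
                rw [le_div_iff₀ hd]
                have hbd : b*d < 1 := by nlinarith
                nlinarith
              exact max_le h1 h2
            have hlen' : ρ^n < (y-(c+gv))/d - (x-(c+gv))/d := by
              rw [he, lt_div_iff₀ hd]
              nlinarith
            obtain ⟨q, hq, h1, h2⟩ := ihu ((x-(c+gv))/d) ((y-(c+gv))/d)
              (div_nonneg (by linarith) hd.le)
              (by rw [div_le_one hd]; linarith) hM' hlen'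
            have h1' := (div_le_iff₀ hd).mp h1
            have h2' := (le_div_iff₀ hd).mp h2
            exact ⟨d*q + (c+gv), hmemv_d q hq, by linarith [mul_comm q d], by linarith [mul_comm q d]⟩
          · by_cases hxc : x ≤ c
            · exact ⟨c, hc_mem, hxc, by linarith [not_lt.mp hyc]⟩
            · by_cases hy2 : c + gv ≤ y
              · exact ⟨c + gv, hcgv_mem, not_lt.mp hxd, hy2⟩
              · exfalso
                push_neg at hyc hxc hy2
                linarith
  -- the gap of Fu
  have hgap : ∀ p ∈ Fu, ¬(a < p ∧ p < a + gu) := by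
    intro p hp ⟨h1, h2⟩
    rw [hinvu] at hp
    rcases hp with ⟨q, hq, hq'⟩ | ⟨q, hq, hq'⟩
    · obtain ⟨hq0, hq1⟩ := hFusub hq
      simp only at hq'
      nlinarith
    · obtain ⟨hq0, hq1⟩ := hFvsub hq
      simp only at hq'
      nlinarith
  -- span: t ≤ a and a + gu ≤ t + r
  have hta : t ≤ a := by
    obtain ⟨s, hs, hs'⟩ := hspan (Set.left_mem_Icc.mpr (by linarith))
    obtain ⟨hs0, hs1⟩ := hs
    simp only at hs'
    nlinarith
  have htr : a + gu ≤ t + r := by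
    obtain ⟨s, hs, hs'⟩ := hspan (Set.right_mem_Icc.mpr (by linarith))
    obtain ⟨hs0, hs1⟩ := hs
    simp only at hs'
    nlinarith
  -- main estimate: gu ≤ r * max gu (b*gv)
  have hmain : gu ≤ r * max gu (b*gv) := by
    by_contra h
    push_neg at h
    set G := max gu (b*gv) with hG
    set lo := (a - t)/r with hlo
    set hi := (a + gu - t)/r with hhi
    have hdiff : hi - lo = gu / r := by rw [hlo, hhi]; ring
    have hGlt : G < gu / r := by rw [lt_div_iff₀ hr0]; nlinarith
    set δ := (gu/r - G)/2 with hδ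
    have hδ0 : 0 < δ := by rw [hδ]; linarith
    obtain ⟨n, hn⟩ := exists_pow_lt_of_lt_one hGu0 hρ1
    have hlo0 : 0 ≤ lo := div_nonneg (by linarith) hr0.le
    have hhi1 : hi ≤ 1 := by rw [hhi, div_le_one hr0]; linarith
    obtain ⟨q, hq, h1, h2⟩ := (key n).1 (lo + δ) (hi - δ) (by linarith)
      (by linarith) (by rw [hδ]; linarith [hdiff]) (by rw [hδ]; linarith [hdiff, hn])
    have hp : r * q + t ∈ Fu := hSF ⟨q, hq, rfl⟩
    refine hgap _ hp ⟨?_, ?_⟩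
    · have : lo < q := by linarith
      rw [hlo, div_lt_iff₀ hr0] at this
      nlinarith
    · have : q < hi := by linarith
      rw [hhi, lt_div_iff₀ hr0] at this
      nlinarith
  rcases max_cases gu (b*gv) with ⟨heq, hle⟩ | ⟨heq, hlt⟩
  · rw [heq] at hmain; nlinarith
  · exact hlt
end

section
/- For the 2-vertex IFS attractor (F_u, F_v) of Figure 1, if S : ℝ → ℝ is an orientation-preserving contracting similarity with ratio r ∈ (0,1) such that S(F_u) ⊆ F_v and S([0,1]) spans the level-1 gap of F_v (i.e., [c, c+g_v] ⊆ S([0,1])), then g_v < g_u. -/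
/-- The set of lengths of open intervals inside `[0,1]` disjoint from `F`. -/
def gapsOf (F : Set ℝ) : Set ℝ :=
  {ℓ | ∃ x y : ℝ, 0 ≤ x ∧ x ≤ y ∧ y ≤ 1 ∧ Set.Ioo x y ∩ F = ∅ ∧ ℓ = y - x}

lemma gapsOf_bddAbove (F : Set ℝ) : BddAbove (gapsOf F) := by
  refine ⟨1, fun ℓ hℓ => ?_⟩
  obtain ⟨x, y, hx, hxy, hy, -, rfl⟩ := hℓ
  linarith

lemma gapsOf_zero_mem (F : Set ℝ) : (0:ℝ) ∈ gapsOf F :=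
  ⟨0, 0, le_refl 0, le_refl 0, zero_le_one, by simp, by ring⟩

lemma gapsOf_sup_nonneg (F : Set ℝ) : 0 ≤ sSup (gapsOf F) :=
  le_csSup (gapsOf_bddAbove F) (gapsOf_zero_mem F)

lemma gap_sup_bound (a b g : ℝ) (ha : 0 < a) (hb : 0 < b) (hg : 0 < g)
    (hsum : a + g + b = 1) (F G : Set ℝ)
    (hF1 : (1:ℝ) ∈ F) (hG0 : (0:ℝ) ∈ G)
    (hinv : F = (fun x => a * x) '' F ∪ (fun x => b * x + (a + g)) '' G) :
    sSup (gapsOf F) ≤ max g (max (a * sSup (gapsOf F)) (b * sSup (gapsOf G))) := by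
  apply csSup_le ⟨0, gapsOf_zero_mem F⟩
  rintro ℓ ⟨x, y, hx, hxy, hy, hdisj, rfl⟩
  have haF : a ∈ F := by
    rw [hinv]; exact Or.inl ⟨1, hF1, by ring⟩
  have hagF : a + g ∈ F := by
    rw [hinv]; exact Or.inr ⟨0, hG0, by ring⟩
  have hscaleF : ∀ z ∈ F, a * z ∈ F := fun z hz => by
    rw [hinv]; exact Or.inl ⟨z, hz, rfl⟩
  have hscaleG : ∀ z ∈ G, b * z + (a + g) ∈ F := fun z hz => by
    rw [hinv]; exact Or.inr ⟨z, hz, rfl⟩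
  have hna : a ∉ Set.Ioo x y := fun h =>
    Set.eq_empty_iff_forall_notMem.mp hdisj a ⟨h, haF⟩
  have hnag : a + g ∉ Set.Ioo x y := fun h =>
    Set.eq_empty_iff_forall_notMem.mp hdisj (a + g) ⟨h, hagF⟩
  rcases le_or_gt y a with hya | hya
  · -- gap lies in the left piece
    have hmem : (y - x) / a ∈ gapsOf F := by
      refine ⟨x / a, y / a, by positivity, by gcongr, ?_, ?_, by ring⟩
      · rw [div_le_one ha]; exact hya
      · apply Set.eq_empty_iff_forall_notMem.mpr
        rintro z ⟨⟨h1, h2⟩, hzF⟩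
        have h3 : a * z ∈ F := hscaleF z hzF
        have h4 : x < a * z := by
          rw [div_lt_iff₀ ha] at h1; linarith [h1]
        have h5 : a * z < y := by
          rw [lt_div_iff₀ ha] at h2; linarith [h2]
        exact Set.eq_empty_iff_forall_notMem.mp hdisj (a * z) ⟨⟨h4, h5⟩, h3⟩
    have h6 : (y - x) / a ≤ sSup (gapsOf F) := le_csSup (gapsOf_bddAbove F) hmem
    have h7 : y - x ≤ a * sSup (gapsOf F) := by
      rw [div_le_iff₀ ha] at h6; linarith [h6]
    exact le_trans h7 (le_trans (le_max_left _ _) (le_max_right _ _))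
  · have hax : a ≤ x := by
      by_contra h
      exact hna ⟨lt_of_not_ge h, hya⟩
    rcases le_or_gt (a + g) x with hagx | hagx
    · -- gap lies in the right piece
      have hmem : (y - x) / b ∈ gapsOf G := by
        refine ⟨(x - (a + g)) / b, (y - (a + g)) / b, div_nonneg (by linarith) hb.le,
          by gcongr, ?_, ?_, by ring⟩
        · rw [div_le_one hb]; linarith
        · apply Set.eq_empty_iff_forall_notMem.mpr
          rintro z ⟨⟨h1, h2⟩, hzG⟩
          have h3 : b * z + (a + g) ∈ F := hscaleG z hzG
          have h4 : x < b * z + (a + g) := by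
            rw [div_lt_iff₀ hb] at h1; linarith [h1]
          have h5 : b * z + (a + g) < y := by
            rw [lt_div_iff₀ hb] at h2; linarith [h2]
          exact Set.eq_empty_iff_forall_notMem.mp hdisj _ ⟨⟨h4, h5⟩, h3⟩
      have h6 : (y - x) / b ≤ sSup (gapsOf G) := le_csSup (gapsOf_bddAbove G) hmem
      have h7 : y - x ≤ b * sSup (gapsOf G) := by
        rw [div_le_iff₀ hb] at h6; linarith [h6]
      exact le_trans h7 (le_trans (le_max_right _ _) (le_max_right _ _))
    · -- gap lies inside the middle gap [a, a+g]
      have hyag : y ≤ a + g := by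
        by_contra h
        exact hnag ⟨hagx, lt_of_not_ge h⟩
      exact le_trans (by linarith) (le_max_left g _)

/-- If an orientation-preserving contracting similarity `S` maps `F_u` into `F_v` and
`S([0,1])` spans the level-1 gap `[c, c+g_v]` of `F_v`, then `g_v < g_u`. -/
theorem span_gap_cross_implies
    (a b c d gu gv : ℝ)
    (ha : 0 < a) (hb : 0 < b) (hc : 0 < c) (hd : 0 < d)
    (hgu : 0 < gu) (hgv : 0 < gv)
    (hsum1 : a + gu + b = 1) (hsum2 : c + gv + d = 1)
    (Fu Fv : Set ℝ)
    (hFune : Fu.Nonempty) (hFucpt : IsCompact Fu)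
    (hFvne : Fv.Nonempty) (hFvcpt : IsCompact Fv)
    (hFu0 : (0:ℝ) ∈ Fu) (hFu1 : (1:ℝ) ∈ Fu) (hFusub : Fu ⊆ Set.Icc 0 1)
    (hFv0 : (0:ℝ) ∈ Fv) (hFv1 : (1:ℝ) ∈ Fv) (hFvsub : Fv ⊆ Set.Icc 0 1)
    (hinvu : Fu = (fun x => a * x) '' Fu ∪ (fun x => b * x + (a + gu)) '' Fv)
    (hinvv : Fv = (fun x => c * x) '' Fv ∪ (fun x => d * x + (c + gv)) '' Fu)
    (r t : ℝ) (hr0 : 0 < r) (hr1 : r < 1)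
    (hSF : (fun x => r * x + t) '' Fu ⊆ Fv)
    (hspan : Set.Icc c (c + gv) ⊆ (fun x => r * x + t) '' Set.Icc 0 1) :
    gv < gu := by
  set mu := sSup (gapsOf Fu) with hmu_def
  set mv := sSup (gapsOf Fv) with hmv_def
  have h1 : mu ≤ max gu (max (a * mu) (b * mv)) :=
    gap_sup_bound a b gu ha hb hgu hsum1 Fu Fv hFu1 hFv0 hinvu
  have h2 : mv ≤ max gv (max (c * mv) (d * mu)) :=
    gap_sup_bound c d gv hc hd hgv hsum2 Fv Fu hFv1 hFu0 hinvv
  -- The gap (c, c+gv) of Fv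
  have hFvgap : ∀ w ∈ Fv, w ∉ Set.Ioo c (c + gv) := by
    intro w hw hwio
    rw [hinvv] at hw
    rcases hw with ⟨z, hz, hzeq⟩ | ⟨z, hz, hzeq⟩ <;> simp only at hzeq
    · have hz1 : z ≤ 1 := (hFvsub hz).2
      have hwc : w ≤ c := by nlinarith
      linarith [hwio.1]
    · have hz0 : 0 ≤ z := (hFusub hz).1
      have hwc : c + gv ≤ w := by nlinarith
      linarith [hwio.2]
  -- Endpoints of the preimage of the gap under S
  obtain ⟨x0, hx0mem, hx0eq⟩ := hspan ⟨le_refl c, by linarith⟩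
  obtain ⟨x1, hx1mem, hx1eq⟩ := hspan ⟨by linarith, le_refl (c + gv)⟩
  simp only at hx0eq hx1eq
  have hx01 : x0 < x1 := by nlinarith [hx0eq, hx1eq]
  have hgapmem : x1 - x0 ∈ gapsOf Fu := by
    refine ⟨x0, x1, hx0mem.1, hx01.le, hx1mem.2, ?_, rfl⟩
    apply Set.eq_empty_iff_forall_notMem.mpr
    rintro z ⟨⟨h1z, h2z⟩, hzF⟩
    have hw : r * z + t ∈ Fv := hSF ⟨z, hzF, rfl⟩
    exact hFvgap _ hw ⟨by nlinarith, by nlinarith⟩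
  have hle : x1 - x0 ≤ mu := le_csSup (gapsOf_bddAbove Fu) hgapmem
  have hval : r * (x1 - x0) = gv := by linarith [hx0eq, hx1eq]
  have hmugv : gv < mu := by nlinarith
  have hmu_pos : 0 < mu := lt_trans hgv hmugv
  have hmv_nonneg : 0 ≤ mv := gapsOf_sup_nonneg Fv
  -- Case analysis
  rcases le_max_iff.mp h1 with hcase | hcase
  · linarith
  rcases le_max_iff.mp hcase with hcase' | hcase'
  · nlinarith
  -- mu ≤ b * mv
  have hmv_pos : 0 < mv := by nlinarith
  rcases le_max_iff.mp h2 with hc2 | hc2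
  · nlinarith
  rcases le_max_iff.mp hc2 with hc2' | hc2'
  · nlinarith
  · nlinarith
end

section
/- Consider the 2-vertex IFS of Figure 5 with maps S₁(x)=ax, S₂(x)=bx+a+g_u on vertex u (F_u = S₁(F_u) ∪ S₂(F_v)) and S₃(x)=ax, S₄(x)=c x + a + g_w, S₅(x)=bx+a+g_u on vertex v (F_v = S₃(F_u) ∪ S₄(F_u) ∪ S₅(F_v)), where S₁ = S₃ and S₂ = S₅ and the images at each vertex are disjoint. Then F_v = F_u ∪ S₄(F_u); in particular F_u ⊆ F_v and F_u ≠ F_v, and F_u = S₁(F_u) ∪ S₂(F_u) ∪ (S₂∘S₄)(F_u), so F_u is the attractor of a standard 3-map IFS. -/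
/-- For the 2-vertex IFS of Figure 5 (with `S₃ = S₁`, `S₅ = S₂`, and `S₄` mapping into the
level-1 gap of `F_u`): `F_v = F_u ∪ S₄(F_u)`, `F_u ⊆ F_v`, `F_u ≠ F_v`, and `F_u` is the
attractor of the standard 3-map IFS `{S₁, S₂, S₂∘S₄}`. -/
theorem figure5_attractor_structure
    (a b c gu gw : ℝ)
    (ha : 0 < a) (hb : 0 < b) (hc : 0 < c) (hgu : 0 < gu) (hgw : 0 < gw)
    (hsum : a + gu + b = 1) (hgap : gw + c < gu)
    (Fu Fv : Set ℝ)
    (hFune : Fu.Nonempty) (hFucpt : IsCompact Fu)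
    (hFvne : Fv.Nonempty) (hFvcpt : IsCompact Fv)
    (hFu0 : (0:ℝ) ∈ Fu) (hFu1 : (1:ℝ) ∈ Fu) (hFusub : Fu ⊆ Set.Icc 0 1)
    (hFv0 : (0:ℝ) ∈ Fv) (hFv1 : (1:ℝ) ∈ Fv) (hFvsub : Fv ⊆ Set.Icc 0 1)
    (hinvu : Fu = (fun x => a * x) '' Fu ∪ (fun x => b * x + (a + gu)) '' Fv)
    (hinvv : Fv = (fun x => a * x) '' Fu ∪ (fun x => c * x + (a + gw)) '' Fu ∪
      (fun x => b * x + (a + gu)) '' Fv) :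
    Fv = Fu ∪ (fun x => c * x + (a + gw)) '' Fu ∧
    Fu ⊆ Fv ∧ Fu ≠ Fv ∧
    Fu = (fun x => a * x) '' Fu ∪ (fun x => b * x + (a + gu)) '' Fu ∪
      ((fun x => b * x + (a + gu)) ∘ (fun x => c * x + (a + gw))) '' Fu := by
  have hgwgu : gw < gu := lt_of_le_of_lt (le_add_of_nonneg_right hc.le) hgap
  have hFveq : Fv = Fu ∪ (fun x => c * x + (a + gw)) '' Fu := by
    calc Fv = (fun x => a * x) '' Fu ∪ (fun x => c * x + (a + gw)) '' Fu ∪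
          (fun x => b * x + (a + gu)) '' Fv := hinvv
      _ = ((fun x => a * x) '' Fu ∪ (fun x => b * x + (a + gu)) '' Fv) ∪
          (fun x => c * x + (a + gw)) '' Fu := Set.union_right_comm _ _ _
      _ = Fu ∪ (fun x => c * x + (a + gw)) '' Fu := by rw [← hinvu]
  have hsub : Fu ⊆ Fv := by rw [hFveq]; exact Set.subset_union_left
  have hmem : (a + gw) ∈ Fv := by
    rw [hFveq]
    exact Or.inr ⟨0, hFu0, by ring⟩
  have hnotmem : (a + gw) ∉ Fu := by
    rw [hinvu]
    rintro (⟨x, hx, hx2⟩ | ⟨y, hy, hy2⟩)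
    · have := (hFusub hx).2
      simp only at hx2
      nlinarith
    · have := (hFvsub hy).1
      simp only at hy2
      nlinarith
  refine ⟨hFveq, hsub, fun h => hnotmem (h ▸ hmem), ?_⟩
  calc Fu = (fun x => a * x) '' Fu ∪ (fun x => b * x + (a + gu)) '' Fv := hinvu
    _ = (fun x => a * x) '' Fu ∪ ((fun x => b * x + (a + gu)) '' Fu ∪
        (fun x => b * x + (a + gu)) '' ((fun x => c * x + (a + gw)) '' Fu)) := by
        rw [hFveq, Set.image_union]
    _ = (fun x => a * x) '' Fu ∪ (fun x => b * x + (a + gu)) '' Fu ∪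
        ((fun x => b * x + (a + gu)) ∘ (fun x => c * x + (a + gw))) '' Fu := by
        rw [Set.union_assoc, Set.image_comp]
end
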